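/- (Blackwell's informativeness theorem, finite case.) Let S be a finite nonempty state set and let (D, σ) and (D', σ') be information structures on S with finite signal sets. Then the following are equivalent: (1) (D', σ') is a garbling of (D, σ); (2) for every finite nonempty action set A, every utility function φ : A × S → ℝ, and every prior ρ : S → ℝ with ρ(s) ≥ 0 and Σ_{s ∈ S} ρ(s) = 1, the expected value satisfies Σ_{d' ∈ D'} max_{a ∈ A} Σ_{s ∈ S} φ(a, s) σ'(d'|s) ρ(s) ≤ Σ_{d ∈ D} max_{a ∈ A} Σ_{s ∈ S} φ(a, s) σ(d|s) ρ(s). -/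

import Mathlib

open Finset

/-- The garbling map as a linear map: kernels to garbled information structures. -/
noncomputable def garbleLM {S D D' : Type*} [Fintype D] (σ : D → S → ℝ) :
    (D → D' → ℝ) →ₗ[ℝ] (D' → S → ℝ) where
  toFun κ := fun d' s => ∑ d, κ d d' * σ d s
  map_add' κ₁ κ₂ := by
    funext d' s
    simp [add_mul, Finset.sum_add_distrib]
  map_smul' c κ := by
    funext d' s
    simp [Finset.mul_sum, mul_assoc]

/-- Blackwell's informativeness theorem (finite case): (D', σ') is a
garbling of (D, σ) iff every Bayesian decision maker weakly prefers (D, σ). -/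
theorem blackwell_informativeness
    {S D D' : Type*} [Fintype S] [Nonempty S] [Fintype D] [Nonempty D]
    [Fintype D'] [Nonempty D']
    (σ : D → S → ℝ) (hσ_nonneg : ∀ d s, 0 ≤ σ d s) (hσ_sum : ∀ s, ∑ d, σ d s = 1)
    (σ' : D' → S → ℝ) (hσ'_nonneg : ∀ d' s, 0 ≤ σ' d' s) (hσ'_sum : ∀ s, ∑ d', σ' d' s = 1) :
    (∃ κ : D → D' → ℝ,
      (∀ d d', 0 ≤ κ d d' ∧ κ d d' ≤ 1) ∧
      (∀ d, ∑ d', κ d d' = 1) ∧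
      (∀ d' s, σ' d' s = ∑ d, κ d d' * σ d s)) ↔
    (∀ (A : Type) [Fintype A] [Nonempty A] (φ : A × S → ℝ) (ρ : S → ℝ),
      (∀ s, 0 ≤ ρ s) → (∑ s, ρ s = 1) →
      ∑ d', Finset.univ.sup' Finset.univ_nonempty
          (fun a : A => ∑ s, φ (a, s) * σ' d' s * ρ s)
        ≤ ∑ d, Finset.univ.sup' Finset.univ_nonempty
          (fun a : A => ∑ s, φ (a, s) * σ d s * ρ s)) := by
  constructor
  · -- garbling ⇒ less valuable
    rintro ⟨κ, hκ01, hκsum, hκeq⟩ A _ _ φ ρ hρ hρsum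
    set M : D → ℝ := fun d => Finset.univ.sup' Finset.univ_nonempty
      (fun a : A => ∑ s, φ (a, s) * σ d s * ρ s) with hM
    calc ∑ d', Finset.univ.sup' Finset.univ_nonempty
            (fun a : A => ∑ s, φ (a, s) * σ' d' s * ρ s)
        ≤ ∑ d', ∑ d, κ d d' * M d := by
          refine Finset.sum_le_sum fun d' _ => ?_
          refine Finset.sup'_le _ _ fun a _ => ?_
          have h1 : ∑ s, φ (a, s) * σ' d' s * ρ s
              = ∑ d, κ d d' * ∑ s, φ (a, s) * σ d s * ρ s := by
            simp only [hκeq, Finset.sum_mul, Finset.mul_sum]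
            rw [Finset.sum_comm]
            exact Finset.sum_congr rfl fun d _ =>
              Finset.sum_congr rfl fun s _ => by ring
          rw [h1]
          refine Finset.sum_le_sum fun d _ => ?_
          exact mul_le_mul_of_nonneg_left
            (Finset.le_sup' (fun a : A => ∑ s, φ (a, s) * σ d s * ρ s) (Finset.mem_univ a)) (hκ01 d d').1
      _ = ∑ d, M d := by
          rw [Finset.sum_comm]
          refine Finset.sum_congr rfl fun d _ => ?_
          rw [← Finset.sum_mul, hκsum, one_mul]
  · intro hval
    classical
    by_contra hng
    -- the set of all garblings of σ
    set P : Set (D → D' → ℝ) := Set.univ.pi fun _ => stdSimplex ℝ D' with hP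
    set K : Set (D' → S → ℝ) := (garbleLM σ) '' P with hK
    have hKconv : Convex ℝ K :=
      (convex_pi fun _ _ => convex_stdSimplex ℝ D').linear_image _
    have hKcomp : IsCompact K :=
      ((isCompact_univ_pi fun _ => isCompact_stdSimplex ℝ D').image
        (garbleLM σ).continuous_of_finiteDimensional)
    have hσ'K : σ' ∉ K := by
      rintro ⟨κ, hκP, hκT⟩
      apply hng
      refine ⟨κ, ?_, ?_, ?_⟩
      · intro d d'
        have hm := hκP d (Set.mem_univ d)
        refine ⟨hm.1 d', ?_⟩
        calc κ d d' ≤ ∑ e, κ d e :=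
              Finset.single_le_sum (fun e _ => hm.1 e) (Finset.mem_univ d')
          _ = 1 := hm.2
      · exact fun d => (hκP d (Set.mem_univ d)).2
      · intro d' s
        exact (congrFun (congrFun hκT.symm d') s)
    obtain ⟨f, u, hfK, hfσ'⟩ :=
      geometric_hahn_banach_closed_point hKconv hKcomp.isClosed hσ'K
    -- coordinates of the separating functional
    set lam : D' → S → ℝ :=
      fun d' s => f ((fun a b => if a = d' ∧ b = s then 1 else 0) : D' → S → ℝ) with hlam
    have hf : ∀ x : D' → S → ℝ, f x = ∑ d', ∑ s, x d' s * lam d' s := by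
      intro x
      have hx : x = ∑ d', ∑ s, x d' s •
          ((fun a b => if a = d' ∧ b = s then (1:ℝ) else 0) : D' → S → ℝ) := by
        funext a b
        simp [Finset.sum_apply, ite_and, Finset.sum_ite_eq', Finset.sum_ite_eq]
      conv_lhs => rw [hx]
      rw [map_sum]
      refine Finset.sum_congr rfl fun d' _ => ?_
      rw [map_sum]
      refine Finset.sum_congr rfl fun s _ => ?_
      rw [map_smul, smul_eq_mul]
    -- the decision problem
    have hn : (0:ℝ) < (Fintype.card S : ℝ) := by
      exact_mod_cast Fintype.card_pos
    have hn' : (Fintype.card S : ℝ) ≠ 0 := ne_of_gt hn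
    haveI : Nonempty (Fin (Fintype.card D')) := ⟨⟨0, Fintype.card_pos⟩⟩
    set e : D' ≃ Fin (Fintype.card D') := Fintype.equivFin D' with he
    have key := hval (Fin (Fintype.card D'))
      (fun p => (Fintype.card S : ℝ) * lam (e.symm p.1) p.2)
      (fun _ => (Fintype.card S : ℝ)⁻¹)
      (fun _ => by positivity)
      (by simp [Finset.sum_const, mul_inv_cancel₀ hn'])
    have hsimp : ∀ (a : D') (x : S → ℝ),
        (∑ s, ((Fintype.card S : ℝ) * lam a s) * x s * (Fintype.card S : ℝ)⁻¹)
          = ∑ s, x s * lam a s := by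
      intro a x
      refine Finset.sum_congr rfl fun s _ => ?_
      field_simp
    -- lower bound for the left side
    have hL : f σ' ≤ ∑ d', Finset.univ.sup' Finset.univ_nonempty
        (fun a : Fin (Fintype.card D') =>
          ∑ s, ((Fintype.card S : ℝ) * lam (e.symm a) s) * σ' d' s *
            (Fintype.card S : ℝ)⁻¹) := by
      rw [hf σ']
      refine Finset.sum_le_sum fun d' _ => ?_
      have := Finset.le_sup' (fun a : Fin (Fintype.card D') =>
          ∑ s, ((Fintype.card S : ℝ) * lam (e.symm a) s) * σ' d' s *
            (Fintype.card S : ℝ)⁻¹) (Finset.mem_univ (e d'))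
      simp only [hsimp, Equiv.symm_apply_apply] at this ⊢
      exact this
    -- the right side is attained by a deterministic garbling
    choose g hg using fun d : D =>
      Finset.exists_mem_eq_sup' (Finset.univ_nonempty)
        (fun a : Fin (Fintype.card D') =>
          ∑ s, ((Fintype.card S : ℝ) * lam (e.symm a) s) * σ d s *
            (Fintype.card S : ℝ)⁻¹)
    set κ0 : D → D' → ℝ := fun d d' => if d' = e.symm (g d) then 1 else 0 with hκ0
    have hκ0P : κ0 ∈ P := by
      intro d _
      refine ⟨fun d' => ?_, ?_⟩
      · dsimp [κ0]; split <;> norm_num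
      · simp [κ0]
    have hyK : garbleLM σ κ0 ∈ K := ⟨κ0, hκ0P, rfl⟩
    have hfy : f (garbleLM σ κ0) =
        ∑ d, ∑ s, σ d s * lam (e.symm (g d)) s := by
      rw [hf]
      have h1 : ∀ d' s, garbleLM σ κ0 d' s = ∑ d, κ0 d d' * σ d s :=
        fun _ _ => rfl
      calc ∑ d', ∑ s, garbleLM σ κ0 d' s * lam d' s
          = ∑ d', ∑ d, κ0 d d' * ∑ s, σ d s * lam d' s := by
            refine Finset.sum_congr rfl fun d' _ => ?_
            simp only [h1, Finset.sum_mul, Finset.mul_sum]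
            rw [Finset.sum_comm]
            exact Finset.sum_congr rfl fun d _ =>
              Finset.sum_congr rfl fun s _ => by ring
        _ = ∑ d, ∑ d', κ0 d d' * ∑ s, σ d s * lam d' s := Finset.sum_comm
        _ = ∑ d, ∑ s, σ d s * lam (e.symm (g d)) s := by
            refine Finset.sum_congr rfl fun d _ => ?_
            simp [κ0, ite_mul, Finset.sum_ite_eq']
    have hR : (∑ d, Finset.univ.sup' Finset.univ_nonempty
        (fun a : Fin (Fintype.card D') =>
          ∑ s, ((Fintype.card S : ℝ) * lam (e.symm a) s) * σ d s *
            (Fintype.card S : ℝ)⁻¹)) = f (garbleLM σ κ0) := by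
      rw [hfy]
      refine Finset.sum_congr rfl fun d _ => ?_
      rw [(hg d).2, hsimp]
    have := hfK _ hyK
    rw [hR] at key
    linarith
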